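/- There exist two sets S₁ = {x² + √6·xy, x² + y², y² + √6·xy} and S₂ = {x², x² + √6·xy + y², y²} of bivariate homogeneous quadratic polynomials such that: (1) in each set the three coefficient matrices are linearly independent, (2) the sets are distinct (indeed no bijection between them matches polynomials up to sign), and (3) ∑_{p∈S₁} p(x,y)³ = ∑_{p∈S₂} p(x,y)³ as polynomials in x, y. -/

import Mathlib

open MvPolynomial

/-- Non-identifiability of sums of cubes of quadratics: the two triples
`S₁ = (x² + √6·xy, x² + y², y² + √6·xy)` and `S₂ = (x², x² + √6·xy + y², y²)`
of bivariate quadratics are each linearly independent, no member of one equals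
a member of the other even up to sign, yet the sums of their cubes coincide. -/
theorem cubics_of_quadratics_nonidentifiable :
    let a : ℝ := Real.sqrt 6
    let x : MvPolynomial (Fin 2) ℝ := X 0
    let y : MvPolynomial (Fin 2) ℝ := X 1
    let p : Fin 3 → MvPolynomial (Fin 2) ℝ :=
      ![x ^ 2 + C a * x * y, x ^ 2 + y ^ 2, y ^ 2 + C a * x * y]
    let q : Fin 3 → MvPolynomial (Fin 2) ℝ :=
      ![x ^ 2, x ^ 2 + C a * x * y + y ^ 2, y ^ 2]
    LinearIndependent ℝ p ∧ LinearIndependent ℝ q ∧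
    (∀ i j : Fin 3, p i ≠ q j ∧ p i ≠ -q j) ∧
    (∑ i : Fin 3, p i ^ 3) = ∑ i : Fin 3, q i ^ 3 := by
  intro a x y p q
  have ha6 : a ^ 2 = 6 := Real.sq_sqrt (by norm_num)
  have ha : (0:ℝ) < a := Real.sqrt_pos.2 (by norm_num)
  have ha0 : a ≠ 0 := ne_of_gt ha
  set e0 : Fin 2 →₀ ℕ := Finsupp.single 0 2 with he0
  set e1 : Fin 2 →₀ ℕ := Finsupp.single 0 1 + Finsupp.single 1 1 with he1
  set e2 : Fin 2 →₀ ℕ := Finsupp.single 1 2 with he2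
  have hx2 : x ^ 2 = monomial e0 1 := X_pow_eq_monomial
  have hy2 : y ^ 2 = monomial e2 1 := X_pow_eq_monomial
  have hxy : C a * x * y = monomial e1 a := by
    rw [mul_assoc]; show C a * (X 0 * X 1) = _
    rw [X, X, monomial_mul, C_mul_monomial]; simp [he1]
  have n01 : e0 ≠ e1 := by
    intro h; simpa [he0, he1, Finsupp.single_apply] using congrFun (congrArg DFunLike.coe h) 0
  have n02 : e0 ≠ e2 := by
    intro h; simpa [he0, he2, Finsupp.single_apply] using congrFun (congrArg DFunLike.coe h) 0
  have n12 : e1 ≠ e2 := by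
    intro h; simpa [he1, he2, Finsupp.single_apply] using congrFun (congrArg DFunLike.coe h) 0
  have n10 := n01.symm
  have n20 := n02.symm
  have n21 := n12.symm
  refine ⟨?_, ?_, ?_, ?_⟩
  · rw [Fintype.linearIndependent_iff]
    intro g hg
    have h0 := congrArg (coeff e0) hg
    have h1 := congrArg (coeff e1) hg
    have h2 := congrArg (coeff e2) hg
    simp [p, Fin.sum_univ_three, hx2, hy2, hxy, coeff_add, coeff_smul, coeff_monomial,
      n01, n02, n12, n10, n20, n21, ha0] at h0 h1 h2
    intro i; fin_cases i <;> simp <;> nlinarith [h0, h1, h2, ha]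
  · rw [Fintype.linearIndependent_iff]
    intro g hg
    have h0 := congrArg (coeff e0) hg
    have h1 := congrArg (coeff e1) hg
    have h2 := congrArg (coeff e2) hg
    simp [q, Fin.sum_univ_three, hx2, hy2, hxy, coeff_add, coeff_smul, coeff_monomial,
      n01, n02, n12, n10, n20, n21, ha0] at h0 h1 h2
    intro i; fin_cases i <;> simp <;> nlinarith [h0, h1, h2, ha]
  · intro i j
    constructor <;> [skip; skip] <;> fin_cases i <;> fin_cases j <;> intro h <;>
    · have h0 := congrArg (coeff e0) h
      have h1 := congrArg (coeff e1) h
      have h2 := congrArg (coeff e2) h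
      simp [p, q, hx2, hy2, hxy, coeff_add, coeff_neg, coeff_monomial,
        n01, n02, n12, n10, n20, n21, ha0] at h0 h1 h2 <;>
      nlinarith [ha]
  · have hC : (C a : MvPolynomial (Fin 2) ℝ) ^ 2 = 6 := by
      rw [← C_pow, ha6]; exact map_ofNat C 6
    simp only [p, q, Fin.sum_univ_three, Matrix.cons_val_zero, Matrix.cons_val_one,
      Matrix.head_cons, Matrix.cons_val_two, Matrix.tail_cons]
    linear_combination (C a * X 0 ^ 3 * X 1 ^ 3 : MvPolynomial (Fin 2) ℝ) * hC
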